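/- For a > √2 and c satisfying 1 - 1/c² ≥ 1/√2 and e^{(a²-1)c²/2} ≥ Δ, the ratio of Gaussian tails satisfies N(c)/N(ac) ≥ Δ, where N is the standard normal tail. -/

import Mathlib

open Real MeasureTheory Filter

/-- The standard normal density. -/
noncomputable def stdNormalPDF (x : ℝ) : ℝ :=
  (Real.sqrt (2 * Real.pi))⁻¹ * Real.exp (-x ^ 2 / 2)

/-- The upper tail of the standard normal distribution. -/
noncomputable def stdNormalTail (x : ℝ) : ℝ :=
  ∫ y in Set.Ici x, stdNormalPDF y

lemma exp_eq (y : ℝ) : Real.exp (-y ^ 2 / 2) = Real.exp (-(1/2) * y ^ 2) := by ring_nf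

lemma integrable_exp_half : Integrable (fun y : ℝ => Real.exp (-y ^ 2 / 2)) := by
  simpa only [← exp_eq] using integrable_exp_neg_mul_sq (by norm_num : (0:ℝ) < 1/2)

lemma tendsto_exp_half : Filter.Tendsto (fun y : ℝ => Real.exp (-y ^ 2 / 2)) atTop (nhds 0) := by
  apply Real.tendsto_exp_atBot.comp
  have h : Filter.Tendsto (fun y : ℝ => y ^ 2 / 2) atTop atTop :=
    (tendsto_pow_atTop (by norm_num)).atTop_div_const (by norm_num)
  have := tendsto_neg_atTop_atBot.comp h
  exact this.congr fun y => (neg_div 2 (y ^ 2)).symm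

lemma intA (x : ℝ) :
    ∫ y in Set.Ioi x, y * Real.exp (-y ^ 2 / 2) = Real.exp (-x ^ 2 / 2) := by
  have hderiv : ∀ y ∈ Set.Ioi x,
      HasDerivAt (fun t : ℝ => -Real.exp (-t ^ 2 / 2)) (y * Real.exp (-y ^ 2 / 2)) y := by
    intro y _
    have h1 : HasDerivAt (fun t : ℝ => -t ^ 2 / 2) (-y) y := by
      have := ((hasDerivAt_pow 2 y).div_const 2).neg
      simpa [neg_div, Pi.neg_def] using this
    have := (h1.exp).neg
    simpa [mul_comm, Pi.neg_def] using this
  have hcont : ContinuousWithinAt (fun t : ℝ => -Real.exp (-t ^ 2 / 2)) (Set.Ici x) x := by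
    apply Continuous.continuousWithinAt
    continuity
  have hint : IntegrableOn (fun y : ℝ => y * Real.exp (-y ^ 2 / 2)) (Set.Ioi x) := by
    have : Integrable (fun y : ℝ => y * Real.exp (-y ^ 2 / 2)) := by
      simpa only [← exp_eq] using integrable_mul_exp_neg_mul_sq (by norm_num : (0:ℝ) < 1/2)
    exact this.integrableOn
  have htend : Filter.Tendsto (fun t : ℝ => -Real.exp (-t ^ 2 / 2)) atTop (nhds 0) := by
    simpa using tendsto_exp_half.neg
  have := integral_Ioi_of_hasDerivAt_of_tendsto hcont hderiv hint htend
  simpa using this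

lemma intB_integrable {x : ℝ} (hx : 1 ≤ x) :
    IntegrableOn (fun y : ℝ => (1 - 3 / y ^ 4) * Real.exp (-y ^ 2 / 2)) (Set.Ioi x) := by
  apply Integrable.mono' ((integrable_exp_half.const_mul 3).integrableOn)
  · apply Measurable.aestronglyMeasurable
    measurability
  · rw [ae_restrict_iff' measurableSet_Ioi]
    refine Filter.Eventually.of_forall (fun y hy => ?_)
    have hy1 : (1:ℝ) < y := lt_of_le_of_lt hx hy
    have hy2 : (1:ℝ) ≤ y ^ 2 := by nlinarith
    have hy4 : (1:ℝ) ≤ y ^ 4 := by nlinarith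
    have h1 : (0:ℝ) < 3 / y ^ 4 := by positivity
    have h2 : 3 / y ^ 4 ≤ 3 := by
      rw [div_le_iff₀ (by positivity)]; nlinarith
    rw [norm_mul, Real.norm_eq_abs, Real.norm_eq_abs, Real.abs_exp]
    have : |1 - 3 / y ^ 4| ≤ 3 := by
      rw [abs_le]; constructor <;> nlinarith
    exact mul_le_mul_of_nonneg_right this (Real.exp_nonneg _)

lemma intB {x : ℝ} (hx : 1 ≤ x) :
    ∫ y in Set.Ioi x, (1 - 3 / y ^ 4) * Real.exp (-y ^ 2 / 2)
      = Real.exp (-x ^ 2 / 2) * (1 / x - 1 / x ^ 3) := by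
  set f : ℝ → ℝ := fun t => -(Real.exp (-t ^ 2 / 2) * (1 / t - 1 / t ^ 3)) with hf
  have hx0 : (0:ℝ) < x := lt_of_lt_of_le one_pos hx
  have hderiv : ∀ y ∈ Set.Ioi x,
      HasDerivAt f ((1 - 3 / y ^ 4) * Real.exp (-y ^ 2 / 2)) y := by
    intro y hy
    have hy0 : y ≠ 0 := ne_of_gt (lt_trans hx0 hy)
    have h1 : HasDerivAt (fun t : ℝ => -t ^ 2 / 2) (-y) y := by
      have := ((hasDerivAt_pow 2 y).div_const 2).neg
      simpa [neg_div, Pi.neg_def] using this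
    have he : HasDerivAt (fun t : ℝ => Real.exp (-t ^ 2 / 2))
        (Real.exp (-y ^ 2 / 2) * (-y)) y := h1.exp
    have hi : HasDerivAt (fun t : ℝ => 1 / t) (-(y ^ 2)⁻¹) y := by
      simpa [one_div] using hasDerivAt_inv hy0
    have hi3 : HasDerivAt (fun t : ℝ => 1 / t ^ 3)
        (-((3:ℕ) * y ^ 2) / (y ^ 3) ^ 2) y := by
      simpa [one_div, pow_succ, Pi.inv_def] using ((hasDerivAt_pow 3 y).inv (pow_ne_zero 3 hy0))
    have := (he.mul (hi.sub hi3)).neg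
    refine this.congr_deriv ?_
    simp only [Pi.sub_apply]
    push_cast
    field_simp
    ring
  have hcont : ContinuousWithinAt f (Set.Ici x) x := by
    apply ContinuousAt.continuousWithinAt
    have h0 : x ≠ 0 := ne_of_gt hx0
    apply ContinuousAt.neg
    apply ContinuousAt.mul
    · apply Continuous.continuousAt; continuity
    · exact ((continuousAt_const.div continuousAt_id h0).sub
        (continuousAt_const.div ((continuousAt_id (x := x)).pow 3) (pow_ne_zero 3 h0)))
  have htend : Filter.Tendsto f atTop (nhds 0) := by
    have ha : Filter.Tendsto (fun t : ℝ => 1 / t) atTop (nhds 0) := by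
      simpa [one_div] using (tendsto_inv_atTop_zero : Filter.Tendsto (fun r : ℝ => r⁻¹) atTop (nhds 0))
    have hb : Filter.Tendsto (fun t : ℝ => 1 / t ^ 3) atTop (nhds 0) := by
      have := (tendsto_inv_atTop_zero (𝕜 := ℝ)).comp (tendsto_pow_atTop (three_ne_zero))
      simpa [one_div, Function.comp_def] using this
    have h1 : Filter.Tendsto (fun t : ℝ => 1 / t - 1 / t ^ 3) atTop (nhds 0) := by
      simpa using ha.sub hb
    have := (tendsto_exp_half.mul h1).neg
    simpa [hf] using this
  have := integral_Ioi_of_hasDerivAt_of_tendsto hcont hderiv (intB_integrable hx) htend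
  rw [this]
  simp [hf]

lemma sqrt_two_pi_pos : (0:ℝ) < Real.sqrt (2 * Real.pi) :=
  Real.sqrt_pos.2 (by positivity)

lemma tail_eq (x : ℝ) :
    stdNormalTail x = (Real.sqrt (2 * Real.pi))⁻¹ * ∫ y in Set.Ioi x, Real.exp (-y ^ 2 / 2) := by
  rw [stdNormalTail, MeasureTheory.integral_Ici_eq_integral_Ioi]
  simp only [stdNormalPDF]
  rw [MeasureTheory.integral_const_mul]

lemma tail_lb {x : ℝ} (hx : 1 ≤ x) :
    (Real.sqrt (2 * Real.pi))⁻¹ * (Real.exp (-x ^ 2 / 2) * (1 / x - 1 / x ^ 3))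
      ≤ stdNormalTail x := by
  rw [tail_eq, ← intB hx]
  apply mul_le_mul_of_nonneg_left _ (by positivity)
  apply setIntegral_mono_on (intB_integrable hx) integrable_exp_half.integrableOn
    measurableSet_Ioi
  intro y hy
  have hy1 : (0:ℝ) < y := lt_of_lt_of_le (lt_of_lt_of_le one_pos hx) (le_of_lt hy)
  have : (0:ℝ) < 3 / y ^ 4 := by positivity
  nlinarith [Real.exp_pos (-y ^ 2 / 2)]

lemma tail_ub {x : ℝ} (hx : 0 < x) :
    stdNormalTail x ≤ (Real.sqrt (2 * Real.pi))⁻¹ * (Real.exp (-x ^ 2 / 2) / x) := by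
  rw [tail_eq]
  apply mul_le_mul_of_nonneg_left _ (by positivity)
  have hmul : Integrable (fun y : ℝ => y * Real.exp (-y ^ 2 / 2)) := by
    simpa only [← exp_eq] using integrable_mul_exp_neg_mul_sq (by norm_num : (0:ℝ) < 1/2)
  have step : ∫ y in Set.Ioi x, Real.exp (-y ^ 2 / 2)
      ≤ ∫ y in Set.Ioi x, (y / x) * Real.exp (-y ^ 2 / 2) := by
    apply setIntegral_mono_on integrable_exp_half.integrableOn _ measurableSet_Ioi
    · intro y hy
      have h1 : 1 ≤ y / x := (one_le_div hx).2 (le_of_lt hy)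
      nlinarith [Real.exp_pos (-y ^ 2 / 2)]
    · have : Integrable (fun y : ℝ => x⁻¹ * (y * Real.exp (-y ^ 2 / 2))) := hmul.const_mul x⁻¹
      apply this.integrableOn.congr_fun _ measurableSet_Ioi
      intro y _
      ring
  calc ∫ y in Set.Ioi x, Real.exp (-y ^ 2 / 2)
      ≤ ∫ y in Set.Ioi x, (y / x) * Real.exp (-y ^ 2 / 2) := step
    _ = x⁻¹ * ∫ y in Set.Ioi x, y * Real.exp (-y ^ 2 / 2) := by
        rw [← MeasureTheory.integral_const_mul]
        congr 1; ext y; ring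
    _ = Real.exp (-x ^ 2 / 2) / x := by rw [intA]; ring

theorem tail_ratio_ge (a c Δ : ℝ) (ha : Real.sqrt 2 < a) (hc : 0 < c) (hΔ : 1 ≤ Δ)
    (hc2 : 1 / Real.sqrt 2 ≤ 1 - 1 / c ^ 2)
    (hΔ2 : Δ ≤ Real.exp ((a ^ 2 - 1) * c ^ 2 / 2)) :
    Δ ≤ stdNormalTail c / stdNormalTail (a * c) := by
  have hs0 : (0:ℝ) < Real.sqrt 2 := Real.sqrt_pos.2 (by norm_num)
  have ha0 : (0:ℝ) < a := lt_trans hs0 ha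
  have hK : (0:ℝ) < (Real.sqrt (2 * Real.pi))⁻¹ := by
    have := sqrt_two_pi_pos; positivity
  -- c > 1
  have hinv : c ^ 2 * (1 / c ^ 2) = 1 := by field_simp
  have hc1 : 1 < c := by
    have h12 : (0:ℝ) < 1 / Real.sqrt 2 := by positivity
    have hcc : 1 / c ^ 2 < 1 := by linarith
    have hc2' : 1 < c ^ 2 := by
      have := mul_lt_mul_of_pos_left hcc (show (0:ℝ) < c ^ 2 by positivity)
      rw [hinv, mul_one] at this; exact this
    nlinarith
  have hs1 : 1 < Real.sqrt 2 := by
    nlinarith [Real.sq_sqrt (by norm_num : (0:ℝ) ≤ 2), hs0]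
  have hac1 : 1 < a * c := by nlinarith
  -- key : 1 ≤ a * (1 - 1/c²)
  have hsmul : Real.sqrt 2 * (1 / Real.sqrt 2) = 1 := by field_simp
  have key : (1:ℝ) ≤ a * (1 - 1 / c ^ 2) := by
    have := mul_le_mul ha.le hc2 (by positivity) ha0.le
    rwa [hsmul] at this
  have key' : c ^ 2 ≤ a * (c ^ 2 - 1) := by
    have h := mul_le_mul_of_nonneg_right key (by positivity : (0:ℝ) ≤ c ^ 2)
    have e : a * (1 - 1 / c ^ 2) * c ^ 2 = a * (c ^ 2 - 1) := by field_simp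
    rw [one_mul, e] at h; exact h
  -- 1/(a*c) ≤ 1/c - 1/c³
  have h1 : 1 / (a * c) ≤ 1 / c - 1 / c ^ 3 := by
    rw [div_sub_div _ _ (ne_of_gt hc) (by positivity : c ^ 3 ≠ 0),
      div_le_div_iff₀ (by positivity) (by positivity)]
    nlinarith [sq_nonneg c, hc]
  -- positivity of denominator
  have hlb2 : (0:ℝ) < 1 / (a * c) - 1 / (a * c) ^ 3 := by
    have h3 : a * c < (a * c) ^ 3 := by
      have t0 : (0:ℝ) < a * c := lt_trans one_pos hac1
      nlinarith [mul_pos (mul_pos (sub_pos.2 hac1) t0) (show (0:ℝ) < a * c + 1 by linarith)]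
    have := one_div_lt_one_div_of_lt (by positivity : (0:ℝ) < a * c) h3
    linarith
  have hpos : 0 < stdNormalTail (a * c) :=
    lt_of_lt_of_le (by positivity) (tail_lb hac1.le)
  rw [le_div_iff₀ hpos]
  -- chain
  have hE : Δ * Real.exp (-(a * c) ^ 2 / 2) ≤ Real.exp (-c ^ 2 / 2) := by
    have := mul_le_mul_of_nonneg_right hΔ2 (Real.exp_nonneg (-(a * c) ^ 2 / 2))
    rw [← Real.exp_add] at this
    have e : (a ^ 2 - 1) * c ^ 2 / 2 + -(a * c) ^ 2 / 2 = -c ^ 2 / 2 := by ring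
    rwa [e] at this
  calc Δ * stdNormalTail (a * c)
      ≤ Δ * ((Real.sqrt (2 * Real.pi))⁻¹ * (Real.exp (-(a * c) ^ 2 / 2) / (a * c))) :=
        mul_le_mul_of_nonneg_left (tail_ub (by positivity)) (by linarith)
    _ = (Real.sqrt (2 * Real.pi))⁻¹ * ((Δ * Real.exp (-(a * c) ^ 2 / 2)) * (1 / (a * c))) := by
        ring
    _ ≤ (Real.sqrt (2 * Real.pi))⁻¹ * (Real.exp (-c ^ 2 / 2) * (1 / c - 1 / c ^ 3)) := by
        apply mul_le_mul_of_nonneg_left _ hK.le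
        apply mul_le_mul hE h1 (by positivity) (Real.exp_nonneg _)
    _ ≤ stdNormalTail c := tail_lb hc1.le
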